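/- Let S be a commutative ring with 1 ≠ 0 and p(X) = p₀ + p₁X + ⋯ + pₘXᵐ ∈ S[X, X⁻¹] with p₀ and pₘ units of S. Then the images of the monomials 1, X, ..., X^{m-1} form an S-basis of S[X, X⁻¹]/(p(X)). -/

import Mathlib

open LaurentPolynomial

/-- If `p = p₀ + p₁X + ⋯ + pₘXᵐ` is a Laurent polynomial over a nontrivial commutative
ring `S` with `p₀` and `pₘ` units of `S`, then the images of `1, X, …, X^(m-1)` form an
`S`-basis of `S[X,X⁻¹]/(p)`. -/
theorem laurent_quotient_basis (S : Type*) [CommRing S] [Nontrivial S]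
    (m : ℕ) (c : ℕ → S) (hc0 : IsUnit (c 0)) (hcm : IsUnit (c m))
    (p : LaurentPolynomial S)
    (hp : p = ∑ i ∈ Finset.range (m + 1), LaurentPolynomial.C (c i) * T (i : ℤ)) :
    ∃ b : Module.Basis (Fin m) S (LaurentPolynomial S ⧸ Ideal.span {p}),
      ∀ i : Fin m, b i = Ideal.Quotient.mk (Ideal.span {p}) (T (i : ℤ)) := by
  classical
  set J : Ideal (LaurentPolynomial S) := Ideal.span {p} with hJ
  set P : Polynomial S := ∑ i ∈ Finset.range (m + 1), Polynomial.C (c i) * Polynomial.X ^ i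
    with hPdef
  have hPL : Polynomial.toLaurent P = p := by
    rw [hp, hPdef, map_sum]
    refine Finset.sum_congr rfl fun i _ => ?_
    rw [map_mul, Polynomial.toLaurent_C, Polynomial.toLaurent_X_pow]
  have hcoeffm : P.coeff m = c m := by
    rw [hPdef, Polynomial.finset_sum_coeff]
    simp [Polynomial.coeff_C_mul, Polynomial.coeff_X_pow]
  have hdegle : P.natDegree ≤ m := by
    rw [hPdef]
    refine Polynomial.natDegree_sum_le_of_forall_le _ _ fun i hi => ?_
    calc (Polynomial.C (c i) * Polynomial.X ^ i).natDegree
        ≤ (Polynomial.X ^ i : Polynomial S).natDegree := Polynomial.natDegree_C_mul_le _ _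
      _ ≤ i := Polynomial.natDegree_X_pow_le i
      _ ≤ m := Nat.lt_succ_iff.mp (Finset.mem_range.mp hi)
  set u := hcm.unit with hu
  set P' : Polynomial S := Polynomial.C (↑u⁻¹ : S) * P with hP'def
  have hP'coeff : P'.coeff m = 1 := by
    rw [hP'def, Polynomial.coeff_C_mul, hcoeffm, ← hcm.unit_spec, ← hu]
    exact u.inv_mul
  have hP'm : P'.Monic := by
    refine Polynomial.monic_of_natDegree_le_of_coeff_eq_one m ?_ hP'coeff
    exact le_trans (Polynomial.natDegree_C_mul_le _ _) hdegle
  have hP'deg : P'.natDegree = m :=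
    le_antisymm (le_trans (Polynomial.natDegree_C_mul_le _ _) hdegle)
      (Polynomial.le_natDegree_of_ne_zero (by rw [hP'coeff]; exact one_ne_zero))
  have hdvd : P' ∣ P := by
    refine ⟨Polynomial.C (c m), ?_⟩
    have h1 : c m * (↑u⁻¹ : S) = 1 := by rw [← hcm.unit_spec, ← hu]; exact u.mul_inv
    rw [hP'def, mul_comm, ← mul_assoc, ← Polynomial.C_mul, h1, Polynomial.C_1, one_mul]
  -- the evaluation map
  have haev : ∀ f : Polynomial S,
      Polynomial.aeval (T 1 : LaurentPolynomial S) f = Polynomial.toLaurent f := by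
    intro f
    have : (Polynomial.aeval (T 1 : LaurentPolynomial S) :
        Polynomial S →ₐ[S] LaurentPolynomial S) = Polynomial.toLaurentAlg := by
      apply Polynomial.algHom_ext
      simp [Polynomial.toLaurentAlg_apply, Polynomial.toLaurent_X]
    rw [← Polynomial.toLaurentAlg_apply, ← this]
  set mkq := Ideal.Quotient.mkₐ S J with hmkq
  have hmkmk : ∀ g, mkq g = Ideal.Quotient.mk J g := fun g => rfl
  have hroot0 : Polynomial.aeval (mkq (T 1)) P' = 0 := by
    rw [Polynomial.aeval_algHom_apply, haev, Ideal.Quotient.mkₐ_eq_mk,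
      Ideal.Quotient.eq_zero_iff_mem]
    have : Polynomial.toLaurent P' = LaurentPolynomial.C (↑u⁻¹ : S) * p := by
      rw [hP'def, map_mul, hPL, Polynomial.toLaurent_C]
    rw [this]
    exact Ideal.mul_mem_left _ _ (Ideal.subset_span rfl)
  set ψ : AdjoinRoot P' →ₐ[S] (LaurentPolynomial S ⧸ J) :=
    AdjoinRoot.liftAlgHom P' (Algebra.ofId S _) (mkq (T 1))
      (by rw [Algebra.toRingHom_ofId, ← Polynomial.aeval_def]; exact hroot0) with hψ
  have hψmk : ∀ f : Polynomial S,
      ψ (AdjoinRoot.mk P' f) = Ideal.Quotient.mk J (Polynomial.toLaurent f) := by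
    intro f
    rw [hψ]; change Polynomial.aeval (mkq (T 1)) f = _
    rw [Polynomial.aeval_algHom_apply, haev,
      Ideal.Quotient.mkₐ_eq_mk]
  -- the root is a unit
  set r := AdjoinRoot.root P' with hr
  have hψr : ψ r = Ideal.Quotient.mk J (T 1) := by
    rw [hr, hψ, AdjoinRoot.liftAlgHom_root]; exact hmkmk _
  have haevP : ∑ i ∈ Finset.range (m + 1), algebraMap S (AdjoinRoot P') (c i) * r ^ i = 0 := by
    have h1 : Polynomial.aeval r P = 0 := by
      rw [AdjoinRoot.aeval_eq, AdjoinRoot.mk_eq_zero]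
      exact hdvd
    rw [hPdef, map_sum] at h1
    simpa using h1
  have hru : IsUnit r := by
    have hu0 : IsUnit (algebraMap S (AdjoinRoot P') (c 0)) := hc0.map _
    set s := ∑ i ∈ Finset.range m, algebraMap S (AdjoinRoot P') (c (i + 1)) * r ^ i with hs
    have hrs : r * s = -(algebraMap S (AdjoinRoot P') (c 0)) := by
      have h2 := haevP
      rw [Finset.sum_range_succ'] at h2
      have h3 : ∑ i ∈ Finset.range m, algebraMap S (AdjoinRoot P') (c (i + 1)) * r ^ (i + 1)
          = r * s := by
        rw [hs, Finset.mul_sum]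
        exact Finset.sum_congr rfl fun i _ => by ring
      rw [h3] at h2
      simp only [pow_zero, mul_one] at h2
      linear_combination h2
    refine IsUnit.of_mul_eq_one (a := r) (s * -(↑hu0.unit⁻¹ : AdjoinRoot P')) ?_
    rw [← mul_assoc, hrs]
    have h4 := hu0.unit.mul_inv
    rw [neg_mul_neg]
    calc algebraMap S (AdjoinRoot P') (c 0) * ↑hu0.unit⁻¹
        = ↑hu0.unit * ↑hu0.unit⁻¹ := by rw [hu0.unit_spec]
      _ = 1 := hu0.unit.mul_inv
  -- injectivity
  have hinj : Function.Injective ψ := by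
    rw [injective_iff_map_eq_zero]
    intro a ha
    obtain ⟨f, rfl⟩ := AdjoinRoot.mk_surjective a
    rw [hψmk, Ideal.Quotient.eq_zero_iff_mem, hJ, Ideal.mem_span_singleton] at ha
    obtain ⟨g, hg⟩ := ha
    obtain ⟨n, h, hh⟩ := g.exists_T_pow
    have key : Polynomial.toLaurent (f * Polynomial.X ^ n) = Polynomial.toLaurent (P * h) := by
      rw [map_mul, map_mul, Polynomial.toLaurent_X_pow, hPL, hg, mul_assoc, mul_comm p, hh]
      ring
    have hfx : f * Polynomial.X ^ n = P * h := Polynomial.toLaurent_injective key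
    have hz : AdjoinRoot.mk P' f * r ^ n = 0 := by
      rw [hr, ← AdjoinRoot.mk_X, ← map_pow, ← map_mul, hfx, AdjoinRoot.mk_eq_zero]
      exact hdvd.mul_right h
    exact ((hru.pow n).mul_left_eq_zero).mp hz
  -- membership facts for surjectivity
  have hTpow : ∀ k : ℕ, Ideal.Quotient.mk J (T (k : ℤ)) ∈ ψ.range := by
    intro k
    rw [AlgHom.mem_range]
    refine ⟨r ^ k, ?_⟩
    rw [map_pow, hψr, ← map_pow, T_pow, mul_one]
  have hCmk : ∀ a : S, Ideal.Quotient.mk J (LaurentPolynomial.C a)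
      = algebraMap S (LaurentPolynomial S ⧸ J) a := by
    intro a
    rw [← hmkmk, C_eq_algebraMap, AlgHom.commutes]
  have hTneg : Ideal.Quotient.mk J (T (-1)) ∈ ψ.range := by
    have hp0 : Ideal.Quotient.mk J (T (-1) * p) = 0 := by
      rw [Ideal.Quotient.eq_zero_iff_mem]
      exact Ideal.mul_mem_left _ _ (Ideal.subset_span rfl)
    have hexp : T (-1) * p = LaurentPolynomial.C (c 0) * T (-1)
        + ∑ i ∈ Finset.range m, LaurentPolynomial.C (c (i + 1)) * T (i : ℤ) := by
      rw [hp, Finset.mul_sum, Finset.sum_range_succ', add_comm]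
      congr 1
      · push_cast
        rw [mul_comm, mul_assoc, ← T_add]
        norm_num
      · refine Finset.sum_congr rfl fun i _ => ?_
        rw [mul_comm, mul_assoc, ← T_add]
        push_cast
        ring_nf
    have h4 : algebraMap S (LaurentPolynomial S ⧸ J) (c 0) * Ideal.Quotient.mk J (T (-1))
        = - ∑ i ∈ Finset.range m,
            algebraMap S (LaurentPolynomial S ⧸ J) (c (i + 1))
              * Ideal.Quotient.mk J (T (i : ℤ)) := by
      rw [eq_neg_iff_add_eq_zero, ← hp0, hexp, map_add, map_mul, hCmk, map_sum]
      congr 1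
    have h5 : Ideal.Quotient.mk J (T (-1))
        = algebraMap S (LaurentPolynomial S ⧸ J) (↑hc0.unit⁻¹ : S)
          * (algebraMap S (LaurentPolynomial S ⧸ J) (c 0) * Ideal.Quotient.mk J (T (-1))) := by
      rw [← mul_assoc, ← map_mul]
      rw [hc0.val_inv_mul, map_one, one_mul]
    rw [h5, h4]
    refine Subalgebra.mul_mem _ (Subalgebra.algebraMap_mem _ _) ?_
    refine Subalgebra.neg_mem _ (Subalgebra.sum_mem _ fun i _ => ?_)
    exact Subalgebra.mul_mem _ (Subalgebra.algebraMap_mem _ _) (hTpow i)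
  have hsurj : Function.Surjective ψ := by
    intro x
    obtain ⟨g, rfl⟩ := Ideal.Quotient.mk_surjective x
    obtain ⟨n, f', hf'⟩ := g.exists_T_pow
    have hg : g = Polynomial.toLaurent f' * T (-(n : ℤ)) := by
      rw [hf', mul_assoc, ← T_add]
      norm_num
    have hmem : Ideal.Quotient.mk J g ∈ ψ.range := by
      rw [hg, map_mul]
      refine Subalgebra.mul_mem _ ((AlgHom.mem_range ψ).mpr ⟨AdjoinRoot.mk P' f', hψmk f'⟩) ?_
      have hT : (T (-(n : ℤ)) : LaurentPolynomial S) = T (-1) ^ n := by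
        rw [T_pow]; ring_nf
      rw [hT, map_pow]
      exact Subalgebra.pow_mem _ hTneg n
    exact hmem
  -- assemble the basis
  set e := AlgEquiv.ofBijective ψ ⟨hinj, hsurj⟩ with he
  set pb := AdjoinRoot.powerBasis' hP'm with hpb
  have hdim : pb.dim = m := by rw [hpb, AdjoinRoot.powerBasis'_dim, hP'deg]
  refine ⟨(pb.basis.map e.toLinearEquiv).reindex (finCongr hdim), fun i => ?_⟩
  rw [Module.Basis.reindex_apply, Module.Basis.map_apply]
  have hbcast : pb.basis ((finCongr hdim).symm i) = pb.gen ^ (i : ℕ) := by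
    rw [pb.basis_eq_pow]
    congr 1
  rw [hbcast]
  have hgen : pb.gen = r := by rw [hpb, AdjoinRoot.powerBasis'_gen]
  have hcoe : (e.toLinearEquiv : AdjoinRoot P' → LaurentPolynomial S ⧸ J) = ψ := by
    rw [he]; rfl
  show (e.toLinearEquiv : AdjoinRoot P' → LaurentPolynomial S ⧸ J) (pb.gen ^ (i : ℕ)) = _
  rw [hcoe, hgen, map_pow, hψr, ← map_pow, T_pow, mul_one]
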